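/- Let θ be a nonempty shifted skew diagram and suppose some row or some column of θ contains exactly a boxes, where a ≥ 1. Then B(θ,p) = 0 for every integer p < a. -/

import Mathlib

/-- `hcoef a b = Σ_{j=0}^{min(a,b)} (-1)^j 2^{a-j} binom(a,j)`; it is `0` when `b < 0`. -/
def hcoef (a : ℕ) (b : ℤ) : ℤ :=
  ∑ j ∈ Finset.range (a + 1),
    if (j : ℤ) ≤ b then (-1) ^ j * 2 ^ (a - j) * (a.choose j) else 0

attribute [local instance] Classical.propDecidable

/-- The south-east corners of a finite set of boxes: boxes `(i,j)` such that
neither `(i+1,j)` nor `(i,j+1)` belongs to the set. -/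
def seCorners (θ : Finset (ℤ × ℤ)) : Finset (ℤ × ℤ) :=
  θ.filter fun b => (b.1 + 1, b.2) ∉ θ ∧ (b.1, b.2 + 1) ∉ θ

/-- The south-east rim of `θ`: boxes `(i,j) ∈ θ` such that no box `(i',j') ∈ θ`
has `i' > i` and `j' > j`. -/
def seRim (θ : Finset (ℤ × ℤ)) : Finset (ℤ × ℤ) :=
  θ.filter fun b => ∀ b' ∈ θ, ¬ (b.1 < b'.1 ∧ b.2 < b'.2)

/-- `d(θ)`: the number of boxes in the south-east rim of `θ`. -/
def dRim (θ : Finset (ℤ × ℤ)) : ℕ := (seRim θ).card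

/-- `θ` is a rim if it equals its own south-east rim. -/
def IsRim (θ : Finset (ℤ × ℤ)) : Prop := θ = seRim θ

/-- Two boxes are adjacent (connected) if they share a side. -/
def Adjacent (b b' : ℤ × ℤ) : Prop := |b.1 - b'.1| + |b.2 - b'.2| = 1

/-- `b'` can be reached from `b` by a chain of adjacent boxes of `θ`. -/
def Reach (θ : Finset (ℤ × ℤ)) (b b' : ℤ × ℤ) : Prop :=
  Relation.ReflTransGen (fun x y => y ∈ θ ∧ Adjacent x y) b b'

/-- The connected components of `θ`. -/
noncomputable def comps (θ : Finset (ℤ × ℤ)) : Finset (Finset (ℤ × ℤ)) :=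
  θ.image fun b => θ.filter fun b' => Reach θ b b'

/-- `N(θ)`: the number of connected components of `θ`. -/
noncomputable def Ncomp (θ : Finset (ℤ × ℤ)) : ℕ := (comps θ).card

/-- `N⁻(θ) = max(N(θ) - 1, 0)`. -/
noncomputable def Nminus (θ : Finset (ℤ × ℤ)) : ℕ := Ncomp θ - 1

/-- `N'(θ)`: the number of connected components of `θ` containing no diagonal box. -/
noncomputable def Nprime (θ : Finset (ℤ × ℤ)) : ℕ :=
  ((comps θ).filter fun c => ∀ b ∈ c, b.1 ≠ b.2).card

/-- `B(θ,p) = Σ_S (-1)^{|S|} h(N⁻(θ∖S), d(θ∖S) - p)`, the sum over subsets `S`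
of the set of south-east corners of `θ`. -/
noncomputable def Bcoef (θ : Finset (ℤ × ℤ)) (p : ℤ) : ℤ :=
  ∑ S ∈ (seCorners θ).powerset,
    (-1) ^ S.card * hcoef (Nminus (θ \ S)) ((dRim (θ \ S) : ℤ) - p)

/-- `C(θ,p) = Σ_S (-1)^{|S|} h(N'(θ∖S), d(θ∖S) - p)`, the sum over subsets `S`
of the set of south-east corners of `θ`. -/
noncomputable def Ccoef (θ : Finset (ℤ × ℤ)) (p : ℤ) : ℤ :=
  ∑ S ∈ (seCorners θ).powerset,
    (-1) ^ S.card * hcoef (Nprime (θ \ S)) ((dRim (θ \ S) : ℤ) - p)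

/-- A strict partition with largest part at most `n`, encoded as a function
with `lam i = 0` for `i` beyond the length. -/
def IsStrictPartition (n : ℕ) (lam : ℤ → ℤ) : Prop :=
  lam 1 ≤ (n : ℤ) ∧ (∀ i : ℤ, 1 ≤ i → 0 ≤ lam i) ∧
  (∀ i : ℤ, 1 ≤ i → lam (i + 1) = 0 ∨ lam (i + 1) < lam i)

/-- The shifted Young diagram `{(i,j) : 1 ≤ i ≤ ℓ, i ≤ j ≤ λ_i + i - 1}` of a
strict partition. -/
noncomputable def shiftedD (n : ℕ) (lam : ℤ → ℤ) : Finset (ℤ × ℤ) :=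
  (Finset.Icc (1 : ℤ) (n : ℤ) ×ˢ Finset.Icc (1 : ℤ) (2 * (n : ℤ))).filter
    fun b => b.1 ≤ b.2 ∧ b.2 ≤ lam b.1 + b.1 - 1

/-- `θ` is a shifted skew diagram: `θ = ν/λ` for strict partitions `λ ⊆ ν`
with `ν_1 ≤ n`. -/
def IsShiftedSkewDiagram (n : ℕ) (θ : Finset (ℤ × ℤ)) : Prop :=
  ∃ lam nu : ℤ → ℤ, IsStrictPartition n lam ∧ IsStrictPartition n nu ∧
    (∀ i : ℤ, 1 ≤ i → lam i ≤ nu i) ∧ θ = shiftedD n nu \ shiftedD n lam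



lemma hcoef_eq_one (m : ℕ) (b : ℤ) (h : (m : ℤ) ≤ b) : hcoef m b = 1 := by
  have : hcoef m b = ∑ j ∈ Finset.range (m + 1), (-1:ℤ) ^ j * 2 ^ (m - j) * (m.choose j) := by
    unfold hcoef
    refine Finset.sum_congr rfl fun j hj => ?_
    rw [if_pos]
    have := Finset.mem_range.mp hj
    have : (j:ℤ) ≤ m := by exact_mod_cast Nat.lt_succ_iff.mp this
    linarith
  rw [this, ← add_pow]
  norm_num

lemma mem_shiftedD {n : ℕ} {lam : ℤ → ℤ} {b : ℤ × ℤ} :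
    b ∈ shiftedD n lam ↔ 1 ≤ b.1 ∧ b.1 ≤ (n:ℤ) ∧ 1 ≤ b.2 ∧ b.2 ≤ 2*(n:ℤ) ∧
      b.1 ≤ b.2 ∧ b.2 ≤ lam b.1 + b.1 - 1 := by
  simp [shiftedD, Finset.mem_filter, Finset.mem_product, Finset.mem_Icc, and_assoc]

lemma part_mono {n : ℕ} {lam : ℤ → ℤ} (h : IsStrictPartition n lam) :
    ∀ i i' : ℤ, 1 ≤ i → i ≤ i' → 1 ≤ lam i' → lam i' + (i' - i) ≤ lam i := by
  intro i i' hi hle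
  refine Int.le_induction
    (motive := fun k _ => 1 ≤ lam k → lam k + (k - i) ≤ lam i) (fun _ => by linarith) ?_ i' hle
  intro k hk ih hpos
  rcases h.2.2 k (by linarith) with h0 | hlt
  · omega
  · have h1 : 1 ≤ lam k := by linarith
    have := ih h1
    linarith

/-- membership in a skew diagram -/
lemma mem_skew {n : ℕ} {lam nu : ℤ → ℤ} (hlam : IsStrictPartition n lam) {b : ℤ × ℤ} :
    b ∈ shiftedD n nu \ shiftedD n lam ↔
      1 ≤ b.1 ∧ b.1 ≤ (n:ℤ) ∧ 1 ≤ b.2 ∧ b.2 ≤ 2*(n:ℤ) ∧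
      b.1 ≤ b.2 ∧ b.2 ≤ nu b.1 + b.1 - 1 ∧ lam b.1 + b.1 ≤ b.2 := by
  rw [Finset.mem_sdiff, mem_shiftedD, mem_shiftedD]
  constructor
  · rintro ⟨⟨h1, h2, h3, h4, h5, h6⟩, h7⟩
    refine ⟨h1, h2, h3, h4, h5, h6, ?_⟩
    by_contra hc
    exact h7 ⟨h1, h2, h3, h4, h5, by linarith⟩
  · rintro ⟨h1, h2, h3, h4, h5, h6, h7⟩
    exact ⟨⟨h1, h2, h3, h4, h5, h6⟩, fun hc => by linarith [hc.2.2.2.2.2]⟩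


section Geom
variable {n : ℕ} {lam nu : ℤ → ℤ}

lemma nu_pos_of_mem (hnu : IsStrictPartition n nu) (hlam : IsStrictPartition n lam)
    {b : ℤ × ℤ} (hb : b ∈ shiftedD n nu \ shiftedD n lam) : b.2 - b.1 + 1 ≤ nu b.1 := by
  have := (mem_skew hlam).mp hb
  linarith [this.2.2.2.2.2.1]

/-- Key growth lemma: if `b` is strictly NW of another box `b'` of the skew diagram,
then the boxes directly right of `b` and right-below of `b` are in the diagram. -/
lemma grow (hn : 0 < n) (hnu : IsStrictPartition n nu) (hlam : IsStrictPartition n lam)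
    {b b' : ℤ × ℤ} (hb : b ∈ shiftedD n nu \ shiftedD n lam)
    (hb' : b' ∈ shiftedD n nu \ shiftedD n lam) (h1 : b.1 < b'.1) (h2 : b.2 < b'.2) :
    (b.1, b.2 + 1) ∈ shiftedD n nu \ shiftedD n lam ∧
    (b.1 + 1, b.2 + 1) ∈ shiftedD n nu \ shiftedD n lam := by
  obtain ⟨a1, a2, a3, a4, a5, a6, a7⟩ := (mem_skew hlam).mp hb
  obtain ⟨c1, c2, c3, c4, c5, c6, c7⟩ := (mem_skew hlam).mp hb'
  have hnb' : 1 ≤ nu b'.1 := by linarith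
  have m1 : nu b'.1 + (b'.1 - b.1) ≤ nu b.1 := part_mono hnu b.1 b'.1 a1 (le_of_lt h1) hnb'
  have m2 : nu b'.1 + (b'.1 - (b.1+1)) ≤ nu (b.1+1) :=
    part_mono hnu (b.1+1) b'.1 (by linarith) (by linarith) hnb'
  have hnb1 : 1 ≤ nu (b.1 + 1) := by linarith
  have m3 : nu (b.1+1) + (b.1 + 1 - 1) ≤ nu 1 := part_mono hnu 1 (b.1+1) (le_refl 1) (by linarith) hnb1
  have hn1 : nu 1 ≤ (n:ℤ) := hnu.1
  -- lam part
  have hlamb1 : lam (b.1+1) ≤ b.2 - b.1 := by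
    rcases hlam.2.2 b.1 a1 with h0 | hlt
    · rw [h0]; linarith
    · linarith
  constructor
  · rw [mem_skew hlam]
    dsimp only
    refine ⟨a1, a2, by linarith, by linarith, by linarith, by linarith, by linarith⟩
  · rw [mem_skew hlam]
    dsimp only
    refine ⟨by linarith, by linarith, by linarith, by linarith, by linarith, by linarith,
      by linarith⟩

lemma row_contig (hn : 0 < n) (hnu : IsStrictPartition n nu) (hlam : IsStrictPartition n lam)
    {i j j' j'' : ℤ} (h1 : (i, j) ∈ shiftedD n nu \ shiftedD n lam)
    (h2 : (i, j'') ∈ shiftedD n nu \ shiftedD n lam) (hj : j ≤ j') (hj' : j' ≤ j'') :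
    (i, j') ∈ shiftedD n nu \ shiftedD n lam := by
  obtain ⟨a1, a2, a3, a4, a5, a6, a7⟩ := (mem_skew hlam).mp h1
  obtain ⟨c1, c2, c3, c4, c5, c6, c7⟩ := (mem_skew hlam).mp h2
  rw [mem_skew hlam]
  dsimp only
  exact ⟨a1, a2, by linarith, by linarith, by linarith, by linarith, by linarith⟩

lemma col_contig (hn : 0 < n) (hnu : IsStrictPartition n nu) (hlam : IsStrictPartition n lam)
    {i i' i'' j : ℤ} (h1 : (i, j) ∈ shiftedD n nu \ shiftedD n lam)
    (h2 : (i'', j) ∈ shiftedD n nu \ shiftedD n lam) (hi : i ≤ i') (hi' : i' ≤ i'') :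
    (i', j) ∈ shiftedD n nu \ shiftedD n lam := by
  obtain ⟨a1, a2, a3, a4, a5, a6, a7⟩ := (mem_skew hlam).mp h1
  obtain ⟨c1, c2, c3, c4, c5, c6, c7⟩ := (mem_skew hlam).mp h2
  have hnui'' : 1 ≤ nu i'' := by linarith
  have m1 : nu i'' + (i'' - i') ≤ nu i' := part_mono hnu i' i'' (by linarith) hi' hnui''
  have hl : lam i' + i' ≤ j := by
    rcases le_or_gt (lam i') 0 with h0 | hpos
    · linarith
    · have := part_mono hlam i i' a1 hi hpos
      linarith
  rw [mem_skew hlam]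
  dsimp only
  exact ⟨by linarith, by linarith, by linarith, by linarith, by linarith, by linarith, hl⟩

end Geom


section ReachLemmas

variable {T : Finset (ℤ × ℤ)} {x y z : ℤ × ℤ}

lemma adjacent_symm (h : Adjacent x y) : Adjacent y x := by
  unfold Adjacent at *
  rw [abs_sub_comm y.1, abs_sub_comm y.2]
  exact h

lemma reach_mem (hz : z ∈ T) (h : Reach T z x) : x ∈ T := by
  induction h with
  | refl => exact hz
  | tail _ h2 _ => exact h2.1

lemma reach_symm (hz : z ∈ T) (h : Reach T z x) : Reach T x z := by
  induction h with
  | refl => exact Relation.ReflTransGen.refl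
  | @tail b c h1 h2 ih =>
    have hb : b ∈ T := reach_mem hz h1
    exact Relation.ReflTransGen.trans
      (Relation.ReflTransGen.single ⟨hb, adjacent_symm h2.2⟩) ih

lemma reach_trans (h1 : Reach T z x) (h2 : Reach T x y) : Reach T z y :=
  Relation.ReflTransGen.trans h1 h2

lemma comp_filter_eq (hb : z ∈ T) (h : Reach T z x) :
    (T.filter fun w => Reach T z w) = T.filter fun w => Reach T x w := by
  ext w
  simp only [Finset.mem_filter]
  constructor
  · rintro ⟨hw, hr⟩
    exact ⟨hw, reach_trans (reach_symm hb h) hr⟩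
  · rintro ⟨hw, hr⟩
    exact ⟨hw, reach_trans h hr⟩


lemma mem_own_comp (hz : z ∈ T) : z ∈ T.filter fun w => Reach T z w :=
  Finset.mem_filter.mpr ⟨hz, Relation.ReflTransGen.refl⟩

lemma comp_eq_of_mem {c c' : Finset (ℤ × ℤ)} (hc : c ∈ comps T) (hc' : c' ∈ comps T)
    (hzc : z ∈ c) (hxc' : x ∈ c') (h : Reach T z x) : c = c' := by
  obtain ⟨b, hb, rfl⟩ := Finset.mem_image.mp hc
  obtain ⟨b', hb', rfl⟩ := Finset.mem_image.mp hc'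
  obtain ⟨hzT, hbz⟩ := Finset.mem_filter.mp hzc
  obtain ⟨hxT, hb'x⟩ := Finset.mem_filter.mp hxc'
  rw [comp_filter_eq hb hbz, comp_filter_eq hzT h, ← comp_filter_eq hb' hb'x]

end ReachLemmas


section Claims

variable {θ S : Finset (ℤ × ℤ)}

lemma adj_right (b : ℤ × ℤ) : Adjacent b (b.1, b.2 + 1) := by
  unfold Adjacent; simp

lemma adj_down (b : ℤ × ℤ) : Adjacent b (b.1 + 1, b.2) := by
  unfold Adjacent; simp

/-- Hypothesis bundle: `θ` behaves like a shifted skew diagram. -/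
def GoodShape (θ : Finset (ℤ × ℤ)) : Prop :=
  (∀ b b' : ℤ × ℤ, b ∈ θ → b' ∈ θ → b.1 < b'.1 → b.2 < b'.2 →
     (b.1, b.2 + 1) ∈ θ ∧ (b.1 + 1, b.2 + 1) ∈ θ) ∧
  (∀ i j j' j'' : ℤ, (i, j) ∈ θ → (i, j'') ∈ θ → j ≤ j' → j' ≤ j'' → (i, j') ∈ θ) ∧
  (∀ i i' i'' j : ℤ, (i, j) ∈ θ → (i'', j) ∈ θ → i ≤ i' → i' ≤ i'' → (i', j) ∈ θ)

/-- Claim C: a box of `T = θ \ S` which is lowest in its content class is in the rim. -/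
lemma contentmax_mem_rim (hg : GoodShape θ) (hS : S ⊆ seCorners θ) {z : ℤ × ℤ}
    (hz : z ∈ θ \ S) (hmax : ∀ w ∈ θ \ S, w.2 - w.1 = z.2 - z.1 → w.1 ≤ z.1) :
    z ∈ seRim (θ \ S) := by
  rw [seRim, Finset.mem_filter]
  refine ⟨hz, fun b' hb' hlt => ?_⟩
  obtain ⟨hlt1, hlt2⟩ := hlt
  have hzθ : z ∈ θ := (Finset.mem_sdiff.mp hz).1
  have hb'θ : b' ∈ θ := (Finset.mem_sdiff.mp hb').1
  obtain ⟨hy, hw⟩ := hg.1 z b' hzθ hb'θ hlt1 hlt2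
  have hwT : (z.1 + 1, z.2 + 1) ∉ θ \ S := by
    intro hmem
    have := hmax _ hmem (by dsimp only; ring)
    dsimp only at this; omega
  have hwS : (z.1 + 1, z.2 + 1) ∈ S := by
    by_contra hc
    exact hwT (Finset.mem_sdiff.mpr ⟨hw, hc⟩)
  obtain ⟨-, hno1, hno2⟩ := Finset.mem_filter.mp (hS hwS)
  dsimp only at hno1 hno2
  rcases eq_or_lt_of_le (by omega : z.1 + 1 ≤ b'.1) with heq | hlt1'
  · -- b' in row z.1 + 1
    have hb2 : z.2 + 1 + 1 ≤ b'.2 := by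
      rcases eq_or_lt_of_le (by omega : z.2 + 1 ≤ b'.2) with heq2 | h2
      · exfalso
        have : b' = (z.1 + 1, z.2 + 1) := Prod.ext heq.symm heq2.symm
        rw [this] at hb'
        exact hwT hb'
      · omega
    have hb'' : (z.1 + 1, b'.2) ∈ θ := by rw [heq, Prod.mk.eta]; exact hb'θ
    exact hno2 (hg.2.1 (z.1+1) (z.2+1) (z.2+1+1) b'.2 hw hb'' (by omega) hb2)
  · rcases eq_or_lt_of_le (by omega : z.2 + 1 ≤ b'.2) with heq2 | hlt2'
    · have hb'' : (b'.1, z.2 + 1) ∈ θ := by rw [heq2, Prod.mk.eta]; exact hb'θ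
      exact hno1 (hg.2.2 (z.1+1) (z.1+1+1) b'.1 (z.2+1) hw hb'' (by omega) (by omega))
    · obtain ⟨hy2, -⟩ := hg.1 (z.1+1, z.2+1) b' hw hb'θ (by dsimp only; omega)
        (by dsimp only; omega)
      dsimp only at hy2
      exact hno2 hy2

/-- Claim D, auxiliary: same-content boxes of `T = θ \ S` are connected. -/
lemma reach_of_content_aux (hg : GoodShape θ) (hS : S ⊆ seCorners θ) :
    ∀ (k : ℕ) (z x : ℤ × ℤ), z ∈ θ \ S → x ∈ θ \ S → x.2 - x.1 = z.2 - z.1 →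
      x.1 = z.1 + k → Reach (θ \ S) z x := by
  intro k
  induction k with
  | zero =>
    intro z x _ _ hc h0
    have : x = z := Prod.ext (by omega) (by omega)
    rw [this]
    exact Relation.ReflTransGen.refl
  | succ k ih =>
    intro z x hz hx hc hk
    have hzθ : z ∈ θ := (Finset.mem_sdiff.mp hz).1
    have hxθ : x ∈ θ := (Finset.mem_sdiff.mp hx).1
    have hlt1 : z.1 < x.1 := by omega
    have hlt2 : z.2 < x.2 := by omega
    obtain ⟨hy, hw⟩ := hg.1 z x hzθ hxθ hlt1 hlt2
    -- y = (z.1, z.2+1) is not a corner since w is below it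
    have hyT : (z.1, z.2 + 1) ∈ θ \ S := by
      rw [Finset.mem_sdiff]
      refine ⟨hy, fun hyS => ?_⟩
      obtain ⟨-, hno1, -⟩ := Finset.mem_filter.mp (hS hyS)
      dsimp only at hno1
      exact hno1 hw
    have hwT : (z.1 + 1, z.2 + 1) ∈ θ \ S := by
      rcases Nat.eq_zero_or_pos k with rfl | hkpos
      · have : x = (z.1 + 1, z.2 + 1) := Prod.ext (by omega) (by omega)
        rwa [← this]
      · obtain ⟨hy2, -⟩ := hg.1 (z.1+1, z.2+1) x hw hxθ (by dsimp only; omega)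
          (by dsimp only; omega)
        dsimp only at hy2
        rw [Finset.mem_sdiff]
        refine ⟨hw, fun hwS => ?_⟩
        obtain ⟨-, -, hno2⟩ := Finset.mem_filter.mp (hS hwS)
        dsimp only at hno2
        exact hno2 hy2
    have step1 : Reach (θ \ S) z (z.1 + 1, z.2 + 1) := by
      refine Relation.ReflTransGen.trans (Relation.ReflTransGen.single ⟨hyT, adj_right z⟩) ?_
      refine Relation.ReflTransGen.single ⟨hwT, ?_⟩
      have := adj_down (z.1, z.2 + 1)
      dsimp only at this ⊢
      exact this
    exact Relation.ReflTransGen.trans step1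
      (ih _ x hwT hx (by dsimp only; omega) (by dsimp only; omega))

lemma reach_of_content (hg : GoodShape θ) (hS : S ⊆ seCorners θ) {z x : ℤ × ℤ}
    (hz : z ∈ θ \ S) (hx : x ∈ θ \ S) (hc : x.2 - x.1 = z.2 - z.1) :
    Reach (θ \ S) z x := by
  rcases le_total z.1 x.1 with h | h
  · exact reach_of_content_aux hg hS (x.1 - z.1).toNat z x hz hx hc (by omega)
  · exact reach_symm hx (reach_of_content_aux hg hS (z.1 - x.1).toNat x z hx hz (by omega)
      (by omega))

end Claims


section Count

variable {θ S : Finset (ℤ × ℤ)}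

/-- content of a box -/
def cont (b : ℤ × ℤ) : ℤ := b.2 - b.1

lemma rim_injOn (T : Finset (ℤ × ℤ)) : Set.InjOn cont (seRim T) := by
  intro z hz x hx hc
  simp only [Finset.coe_filter, Set.mem_setOf_eq, seRim, Finset.mem_coe,
    Finset.mem_filter] at hz hx
  by_contra hne
  unfold cont at hc
  rcases lt_trichotomy z.1 x.1 with h | h | h
  · exact hz.2 x hx.1 ⟨h, by omega⟩
  · exact hne (Prod.ext h (by omega))
  · exact hx.2 z hz.1 ⟨h, by omega⟩

lemma image_cont_rim (hg : GoodShape θ) (hS : S ⊆ seCorners θ) :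
    (seRim (θ \ S)).image cont = (θ \ S).image cont := by
  apply Finset.Subset.antisymm
  · exact Finset.image_subset_image (Finset.filter_subset _ _)
  · intro ct hct
    obtain ⟨b, hb, rfl⟩ := Finset.mem_image.mp hct
    have hne : ((θ \ S).filter fun w => cont w = cont b).Nonempty := ⟨b, Finset.mem_filter.mpr ⟨hb, rfl⟩⟩
    obtain ⟨z, hz, hzmax⟩ := Finset.exists_max_image _ Prod.fst hne
    obtain ⟨hzT, hzc⟩ := Finset.mem_filter.mp hz
    have hrim : z ∈ seRim (θ \ S) := by
      refine contentmax_mem_rim hg hS hzT fun w hw hwc => ?_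
      exact hzmax w (Finset.mem_filter.mpr ⟨hw, by unfold cont at *; omega⟩)
    exact Finset.mem_image.mpr ⟨z, hrim, by unfold cont at *; omega⟩

lemma dRim_eq (hg : GoodShape θ) (hS : S ⊆ seCorners θ) :
    dRim (θ \ S) = ((θ \ S).image cont).card := by
  rw [dRim, ← image_cont_rim hg hS, Finset.card_image_of_injOn (rim_injOn _)]

lemma comp_subset {c : Finset (ℤ × ℤ)} {T : Finset (ℤ × ℤ)} (hc : c ∈ comps T) : c ⊆ T := by
  obtain ⟨b, hb, rfl⟩ := Finset.mem_image.mp hc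
  exact Finset.filter_subset _ _

lemma image_cont_biUnion (T : Finset (ℤ × ℤ)) :
    T.image cont = (comps T).biUnion fun c => c.image cont := by
  apply Finset.Subset.antisymm
  · intro ct hct
    obtain ⟨b, hb, rfl⟩ := Finset.mem_image.mp hct
    refine Finset.mem_biUnion.mpr ⟨T.filter fun w => Reach T b w, ?_, ?_⟩
    · exact Finset.mem_image.mpr ⟨b, hb, rfl⟩
    · exact Finset.mem_image.mpr ⟨b, mem_own_comp hb, rfl⟩
  · intro ct hct
    obtain ⟨c, hc, hct⟩ := Finset.mem_biUnion.mp hct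
    obtain ⟨b, hb, rfl⟩ := Finset.mem_image.mp hct
    exact Finset.mem_image.mpr ⟨b, comp_subset hc hb, rfl⟩

lemma comps_disjoint_cont (hg : GoodShape θ) (hS : S ⊆ seCorners θ) :
    ∀ c ∈ comps (θ \ S), ∀ c' ∈ comps (θ \ S), c ≠ c' →
      Disjoint (c.image cont) (c'.image cont) := by
  intro c hc c' hc' hne
  rw [Finset.disjoint_left]
  intro ct h1 h2
  obtain ⟨z, hz, rfl⟩ := Finset.mem_image.mp h1
  obtain ⟨x, hx, hcx⟩ := Finset.mem_image.mp h2
  have hreach : Reach (θ \ S) z x :=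
    reach_of_content hg hS (comp_subset hc hz) (comp_subset hc' hx)
      (by unfold cont at hcx; omega)
  exact hne (comp_eq_of_mem hc hc' hz hx hreach)

lemma comp_nonempty {c : Finset (ℤ × ℤ)} {T : Finset (ℤ × ℤ)} (hc : c ∈ comps T) :
    c.Nonempty := by
  obtain ⟨b, hb, rfl⟩ := Finset.mem_image.mp hc
  exact ⟨b, mem_own_comp hb⟩

/-- Master counting inequality. -/
lemma key_count (hg : GoodShape θ) (hS : S ⊆ seCorners θ) (E : Finset (ℤ × ℤ))
    (hE : E ⊆ θ \ S) (hinj : Set.InjOn cont E)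
    (hconn : ∀ e ∈ E, ∀ e' ∈ E, Reach (θ \ S) e e') :
    E.card + Nminus (θ \ S) ≤ dRim (θ \ S) := by
  have hsum : dRim (θ \ S) = ∑ c ∈ comps (θ \ S), (c.image cont).card := by
    rw [dRim_eq hg hS, image_cont_biUnion, Finset.card_biUnion (comps_disjoint_cont hg hS)]
  rcases E.eq_empty_or_nonempty with rfl | ⟨e₀, he₀⟩
  · simp only [Finset.card_empty, zero_add, hsum, Nminus, Ncomp]
    calc (comps (θ \ S)).card - 1 ≤ (comps (θ \ S)).card := Nat.sub_le _ _
    _ = ∑ c ∈ comps (θ \ S), 1 := by rw [Finset.sum_const, smul_eq_mul, mul_one]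
    _ ≤ _ := Finset.sum_le_sum fun c hc => Nat.one_le_iff_ne_zero.mpr
        (by simpa [Finset.card_eq_zero, ← Finset.nonempty_iff_ne_empty] using
          (comp_nonempty hc).card_pos.ne')
  · set T := θ \ S
    have he₀T : e₀ ∈ T := hE he₀
    set c₀ : Finset (ℤ × ℤ) := T.filter fun w => Reach T e₀ w with hc₀def
    have hc₀ : c₀ ∈ comps T := Finset.mem_image.mpr ⟨e₀, he₀T, rfl⟩
    have hEc₀ : E ⊆ c₀ := fun e he =>
      Finset.mem_filter.mpr ⟨hE he, hconn e₀ he₀ e he⟩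
    have h1 : E.card ≤ (c₀.image cont).card := by
      rw [← Finset.card_image_of_injOn hinj]
      exact Finset.card_le_card (Finset.image_subset_image hEc₀)
    have h2 : Nminus T ≤ ∑ c ∈ (comps T).erase c₀, (c.image cont).card := by
      have : Nminus T ≤ ((comps T).erase c₀).card := by
        rw [Nminus, Ncomp, Finset.card_erase_of_mem hc₀]
      calc Nminus T ≤ ((comps T).erase c₀).card := this
      _ = ∑ c ∈ (comps T).erase c₀, 1 := by rw [Finset.sum_const, smul_eq_mul, mul_one]
      _ ≤ _ := Finset.sum_le_sum fun c hc => Nat.one_le_iff_ne_zero.mpr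
          (by simpa [Finset.card_eq_zero, ← Finset.nonempty_iff_ne_empty] using
            (comp_nonempty (Finset.mem_of_mem_erase hc)).card_pos.ne')
    have h3 : (c₀.image cont).card + ∑ c ∈ (comps T).erase c₀, (c.image cont).card
        = ∑ c ∈ comps T, (c.image cont).card :=
      Finset.add_sum_erase (comps T) (fun c => (c.image cont).card) hc₀
    omega

end Count


section BuildE

variable {θ S : Finset (ℤ × ℤ)}

lemma adjacent_step_right {p q : ℤ × ℤ} (h1 : q.1 = p.1) (h2 : q.2 = p.2 + 1) :
    Adjacent p q := by
  unfold Adjacent; rw [h1, h2]; simp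

lemma adjacent_step_down {p q : ℤ × ℤ} (h1 : q.1 = p.1 + 1) (h2 : q.2 = p.2) :
    Adjacent p q := by
  unfold Adjacent; rw [h1, h2]; simp

lemma reach_horiz (T : Finset (ℤ × ℤ)) :
    ∀ (k : ℕ) (i j : ℤ), (∀ t : ℤ, 0 ≤ t → t ≤ k → (i, j + t) ∈ T) →
      Reach T (i, j) (i, j + k) := by
  intro k
  induction k with
  | zero =>
    intro i j _
    norm_num
    exact Relation.ReflTransGen.refl
  | succ k ih =>
    intro i j h
    have h1 : Reach T (i, j) (i, j + k) := ih i j fun t ht1 ht2 => h t ht1 (by push_cast; omega)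
    refine Relation.ReflTransGen.tail h1 ⟨?_, ?_⟩
    · have hx := h (k + 1) (by omega) (by push_cast; omega)
      exact_mod_cast hx
    · exact adjacent_step_right (by dsimp only) (by dsimp only; push_cast; ring)

lemma reach_vert (T : Finset (ℤ × ℤ)) :
    ∀ (k : ℕ) (i j : ℤ), (∀ t : ℤ, 0 ≤ t → t ≤ k → (i + t, j) ∈ T) →
      Reach T (i, j) (i + k, j) := by
  intro k
  induction k with
  | zero =>
    intro i j _
    norm_num
    exact Relation.ReflTransGen.refl
  | succ k ih =>
    intro i j h
    have h1 : Reach T (i, j) (i + k, j) := ih i j fun t ht1 ht2 => h t ht1 (by push_cast; omega)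
    refine Relation.ReflTransGen.tail h1 ⟨?_, ?_⟩
    · have hx := h (k + 1) (by omega) (by push_cast; omega)
      exact_mod_cast hx
    · exact adjacent_step_down (by dsimp only; push_cast; ring) (by dsimp only)

/-- Construction of `E` in the row case. -/
lemma build_E_row (hg : GoodShape θ) (hS : S ⊆ seCorners θ) {i : ℤ} {a : ℕ}
    (ha : 1 ≤ a) (hcard : (θ.filter fun b => b.1 = i).card = a) :
    ∃ E : Finset (ℤ × ℤ), E ⊆ θ \ S ∧ E.card = a - 1 ∧ Set.InjOn cont E ∧
      (∀ e ∈ E, ∀ e' ∈ E, Reach (θ \ S) e e') := by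
  set R := θ.filter fun b => b.1 = i with hR
  have hRne : R.Nonempty := Finset.card_pos.mp (by omega)
  have hImne : (R.image Prod.snd).Nonempty := hRne.image _
  set m := (R.image Prod.snd).max' hImne with hm
  have him : (i, m) ∈ R := by
    obtain ⟨b, hb, hbm⟩ := Finset.mem_image.mp ((R.image Prod.snd).max'_mem hImne)
    have : b.1 = i := (Finset.mem_filter.mp hb).2
    rwa [show (i, m) = b from (Prod.ext this hbm).symm]
  have himθ : (i, m) ∈ θ := (Finset.mem_filter.mp him).1
  have hElt : ∀ b ∈ R.erase (i, m), b.2 < m := by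
    intro b hb
    obtain ⟨hbne, hbR⟩ := Finset.mem_erase.mp hb
    have hbi : b.1 = i := (Finset.mem_filter.mp hbR).2
    have hble : b.2 ≤ m := Finset.le_max' _ _ (Finset.mem_image.mpr ⟨b, hbR, rfl⟩)
    exact lt_of_le_of_ne hble fun hbm => hbne (Prod.ext hbi hbm)
  have hEsub : ∀ b ∈ R.erase (i, m), b ∈ θ \ S := by
    intro b hb
    obtain ⟨hbne, hbR⟩ := Finset.mem_erase.mp hb
    obtain ⟨hbθ, hbi⟩ := Finset.mem_filter.mp hbR
    have hblt : b.2 < m := hElt b hb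
    have hbθ' : (i, b.2) ∈ θ := by rwa [show (i, b.2) = b from (Prod.ext hbi.symm rfl)]
    have hnext : (i, b.2 + 1) ∈ θ := hg.2.1 i b.2 (b.2 + 1) m hbθ' himθ (by omega) (by omega)
    rw [Finset.mem_sdiff]
    refine ⟨hbθ, fun hbS => ?_⟩
    obtain ⟨-, -, hno⟩ := Finset.mem_filter.mp (hS hbS)
    exact hno (by rwa [hbi])
  have main : ∀ e ∈ R.erase (i, m), ∀ e' ∈ R.erase (i, m), e.2 ≤ e'.2 →
      Reach (θ \ S) e e' := by
    intro e he e' he' hle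
    have hei : e.1 = i := (Finset.mem_filter.mp (Finset.mem_erase.mp he).2).2
    have he'i : e'.1 = i := (Finset.mem_filter.mp (Finset.mem_erase.mp he').2).2
    have he'lt : e'.2 < m := hElt e' he'
    have heθ : (i, e.2) ∈ θ := by
      rw [show (i, e.2) = e from (Prod.ext hei.symm rfl)]
      exact (Finset.mem_filter.mp (Finset.mem_erase.mp he).2).1
    have hbox : ∀ t : ℤ, 0 ≤ t → t ≤ ((e'.2 - e.2).toNat : ℤ) → (i, e.2 + t) ∈ θ \ S := by
      intro t ht1 ht2
      have hb : (i, e.2 + t) ∈ θ := hg.2.1 i e.2 (e.2 + t) m heθ himθ (by omega) (by omega)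
      refine hEsub _ (Finset.mem_erase.mpr ⟨?_, Finset.mem_filter.mpr ⟨hb, rfl⟩⟩)
      intro hcontra
      have : e.2 + t = m := congrArg Prod.snd hcontra
      omega
    have hreach := reach_horiz (θ \ S) (e'.2 - e.2).toNat i e.2 hbox
    have he'eq : (i, e.2 + ((e'.2 - e.2).toNat : ℤ)) = e' := Prod.ext he'i.symm (by dsimp only; omega)
    have heeq : (i, e.2) = e := Prod.ext hei.symm rfl
    rwa [he'eq, heeq] at hreach
  refine ⟨R.erase (i, m), hEsub, ?_, ?_, ?_⟩
  · rw [Finset.card_erase_of_mem him, hcard]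
  · intro x hx y hy hxy
    rw [Finset.mem_coe] at hx hy
    have hxi : x.1 = i := (Finset.mem_filter.mp (Finset.mem_erase.mp hx).2).2
    have hyi : y.1 = i := (Finset.mem_filter.mp (Finset.mem_erase.mp hy).2).2
    unfold cont at hxy
    exact Prod.ext (hxi.trans hyi.symm) (by omega)
  · intro e he e' he'
    rcases le_total e.2 e'.2 with h | h
    · exact main e he e' he' h
    · exact reach_symm (hEsub e' he') (main e' he' e he h)

/-- Construction of `E` in the column case. -/
lemma build_E_col (hg : GoodShape θ) (hS : S ⊆ seCorners θ) {j : ℤ} {a : ℕ}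
    (ha : 1 ≤ a) (hcard : (θ.filter fun b => b.2 = j).card = a) :
    ∃ E : Finset (ℤ × ℤ), E ⊆ θ \ S ∧ E.card = a - 1 ∧ Set.InjOn cont E ∧
      (∀ e ∈ E, ∀ e' ∈ E, Reach (θ \ S) e e') := by
  set R := θ.filter fun b => b.2 = j with hR
  have hRne : R.Nonempty := Finset.card_pos.mp (by omega)
  have hImne : (R.image Prod.fst).Nonempty := hRne.image _
  set m := (R.image Prod.fst).max' hImne with hm
  have him : (m, j) ∈ R := by
    obtain ⟨b, hb, hbm⟩ := Finset.mem_image.mp ((R.image Prod.fst).max'_mem hImne)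
    have : b.2 = j := (Finset.mem_filter.mp hb).2
    rwa [show (m, j) = b from (Prod.ext hbm this).symm]
  have himθ : (m, j) ∈ θ := (Finset.mem_filter.mp him).1
  have hElt : ∀ b ∈ R.erase (m, j), b.1 < m := by
    intro b hb
    obtain ⟨hbne, hbR⟩ := Finset.mem_erase.mp hb
    have hbj : b.2 = j := (Finset.mem_filter.mp hbR).2
    have hble : b.1 ≤ m := Finset.le_max' _ _ (Finset.mem_image.mpr ⟨b, hbR, rfl⟩)
    exact lt_of_le_of_ne hble fun hbm => hbne (Prod.ext hbm hbj)
  have hEsub : ∀ b ∈ R.erase (m, j), b ∈ θ \ S := by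
    intro b hb
    obtain ⟨hbne, hbR⟩ := Finset.mem_erase.mp hb
    obtain ⟨hbθ, hbj⟩ := Finset.mem_filter.mp hbR
    have hblt : b.1 < m := hElt b hb
    have hbθ' : (b.1, j) ∈ θ := by rwa [show (b.1, j) = b from (Prod.ext rfl hbj.symm)]
    have hnext : (b.1 + 1, j) ∈ θ := hg.2.2 b.1 (b.1 + 1) m j hbθ' himθ (by omega) (by omega)
    rw [Finset.mem_sdiff]
    refine ⟨hbθ, fun hbS => ?_⟩
    obtain ⟨-, hno, -⟩ := Finset.mem_filter.mp (hS hbS)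
    exact hno (by rwa [hbj])
  have main : ∀ e ∈ R.erase (m, j), ∀ e' ∈ R.erase (m, j), e.1 ≤ e'.1 →
      Reach (θ \ S) e e' := by
    intro e he e' he' hle
    have hej : e.2 = j := (Finset.mem_filter.mp (Finset.mem_erase.mp he).2).2
    have he'j : e'.2 = j := (Finset.mem_filter.mp (Finset.mem_erase.mp he').2).2
    have he'lt : e'.1 < m := hElt e' he'
    have heθ : (e.1, j) ∈ θ := by
      rw [show (e.1, j) = e from (Prod.ext rfl hej.symm)]
      exact (Finset.mem_filter.mp (Finset.mem_erase.mp he).2).1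
    have hbox : ∀ t : ℤ, 0 ≤ t → t ≤ ((e'.1 - e.1).toNat : ℤ) → (e.1 + t, j) ∈ θ \ S := by
      intro t ht1 ht2
      have hb : (e.1 + t, j) ∈ θ := hg.2.2 e.1 (e.1 + t) m j heθ himθ (by omega) (by omega)
      refine hEsub _ (Finset.mem_erase.mpr ⟨?_, Finset.mem_filter.mpr ⟨hb, rfl⟩⟩)
      intro hcontra
      have : e.1 + t = m := congrArg Prod.fst hcontra
      omega
    have hreach := reach_vert (θ \ S) (e'.1 - e.1).toNat e.1 j hbox
    have he'eq : (e.1 + ((e'.1 - e.1).toNat : ℤ), j) = e' := Prod.ext (by dsimp only; omega) he'j.symm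
    have heeq : (e.1, j) = e := Prod.ext rfl hej.symm
    rwa [he'eq, heeq] at hreach
  refine ⟨R.erase (m, j), hEsub, ?_, ?_, ?_⟩
  · rw [Finset.card_erase_of_mem him, hcard]
  · intro x hx y hy hxy
    rw [Finset.mem_coe] at hx hy
    have hxj : x.2 = j := (Finset.mem_filter.mp (Finset.mem_erase.mp hx).2).2
    have hyj : y.2 = j := (Finset.mem_filter.mp (Finset.mem_erase.mp hy).2).2
    unfold cont at hxy
    exact Prod.ext (by omega) (hxj.trans hyj.symm)
  · intro e he e' he'
    rcases le_total e.1 e'.1 with h | h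
    · exact main e he e' he' h
    · exact reach_symm (hEsub e' he') (main e' he' e he h)

end BuildE


section Final

lemma goodShape_skew {n : ℕ} {lam nu : ℤ → ℤ} (hn : 0 < n)
    (hnu : IsStrictPartition n nu) (hlam : IsStrictPartition n lam) :
    GoodShape (shiftedD n nu \ shiftedD n lam) :=
  ⟨fun _ _ hb hb' h1 h2 => grow hn hnu hlam hb hb' h1 h2,
   fun _ _ _ _ h1 h2 hj hj' => row_contig hn hnu hlam h1 h2 hj hj',
   fun _ _ _ _ h1 h2 hi hi' => col_contig hn hnu hlam h1 h2 hi hi'⟩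

lemma corners_nonempty {θ : Finset (ℤ × ℤ)} (hne : θ.Nonempty) :
    (seCorners θ).Nonempty := by
  obtain ⟨b, hb, hmax⟩ := θ.exists_max_image (fun b => b.1 + b.2) hne
  refine ⟨b, Finset.mem_filter.mpr ⟨hb, ?_, ?_⟩⟩
  · intro hc; have := hmax _ hc; dsimp only at this; omega
  · intro hc; have := hmax _ hc; dsimp only at this; omega


/-- If a nonempty shifted skew diagram `θ` has some row or some column with
exactly `a` boxes (`a ≥ 1`), then `B(θ,p) = 0` for every integer `p < a`. -/
theorem Bcoef_eq_zero_of_short (n : ℕ) (hn : 0 < n) (θ : Finset (ℤ × ℤ))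
    (hθ : IsShiftedSkewDiagram n θ) (hne : θ.Nonempty) (a : ℕ) (ha : 1 ≤ a)
    (hrowcol : (∃ i : ℤ, (θ.filter fun b => b.1 = i).card = a) ∨
               (∃ j : ℤ, (θ.filter fun b => b.2 = j).card = a))
    (p : ℤ) (hp : p < (a : ℤ)) : Bcoef θ p = 0 := by
  obtain ⟨lam, nu, hlam, hnu, hsub, hθeq⟩ := hθ
  subst hθeq
  have hg : GoodShape (shiftedD n nu \ shiftedD n lam) := goodShape_skew hn hnu hlam
  have hcne : (seCorners (shiftedD n nu \ shiftedD n lam)).Nonempty := corners_nonempty hne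
  rw [Bcoef]
  have hterm : ∀ S ∈ (seCorners (shiftedD n nu \ shiftedD n lam)).powerset,
      (-1 : ℤ) ^ S.card *
        hcoef (Nminus ((shiftedD n nu \ shiftedD n lam) \ S))
          ((dRim ((shiftedD n nu \ shiftedD n lam) \ S) : ℤ) - p) = (-1) ^ S.card := by
    intro S hS'
    have hS := Finset.mem_powerset.mp hS'
    obtain ⟨E, hEsub, hEcard, hEinj, hEconn⟩ :
        ∃ E : Finset (ℤ × ℤ), E ⊆ (shiftedD n nu \ shiftedD n lam) \ S ∧ E.card = a - 1 ∧
          Set.InjOn cont E ∧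
          (∀ e ∈ E, ∀ e' ∈ E, Reach ((shiftedD n nu \ shiftedD n lam) \ S) e e') := by
      rcases hrowcol with ⟨i, hi⟩ | ⟨j, hj⟩
      · exact build_E_row hg hS ha hi
      · exact build_E_col hg hS ha hj
    have hkey := key_count hg hS E hEsub hEinj hEconn
    rw [hcoef_eq_one _ _ (by omega), mul_one]
  rw [Finset.sum_congr rfl hterm, Finset.sum_powerset_neg_one_pow_card,
    if_neg (Finset.nonempty_iff_ne_empty.mp hcne)]

end Final
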